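/- A single local T gate completely erases the magic of the local-magic state: applying T to the first qubit of v = (1/√2)(|00⟩ + e^{iπ/4}|11⟩) yields w = (T ⊗ I) v = (1/√2)(|00⟩ + i|11⟩), and M₂(w wᴴ) = 0. -/

import Mathlib

noncomputable section
open Matrix Kronecker

/-- The four single-qubit Pauli matrices I, X, Y, Z. -/
def pauli : Fin 4 → Matrix (Fin 2) (Fin 2) ℂ :=
  ![1, !![0, 1; 1, 0], !![0, -Complex.I; Complex.I, 0], !![1, 0; 0, -1]]

/-- Two-qubit Pauli strings σ₁ ⊗ σ₂. -/
def pauli2 (a : Fin 4 × Fin 4) : Matrix (Fin 2 × Fin 2) (Fin 2 × Fin 2) ℂ :=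
  pauli a.1 ⊗ₖ pauli a.2

/-- Rank-one density matrix v vᴴ. -/
def dm {ι : Type*} (v : ι → ℂ) : Matrix ι ι ℂ := Matrix.vecMulVec v (star v)

/-- Stabilizer 2-Rényi entropy of a two-qubit state. -/
def M2two (ψ : Matrix (Fin 2 × Fin 2) (Fin 2 × Fin 2) ℂ) : ℝ :=
  - Real.logb 2 ((1 / 4) * ∑ a : Fin 4 × Fin 4, ‖(pauli2 a * ψ).trace‖ ^ 4)

/-- The T gate diag(1, e^{iπ/4}). -/
def Tgate : Matrix (Fin 2) (Fin 2) ℂ :=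
  !![1, 0; 0, Complex.exp (Complex.I * (Real.pi / 4 : ℝ))]

/-- The local-magic state (1/√2)(|00⟩ + e^{iπ/4}|11⟩). -/
def lmState : Fin 2 × Fin 2 → ℂ := fun p =>
  if p = ((0 : Fin 2), (0 : Fin 2)) then (1 / Real.sqrt 2 : ℝ)
  else if p = ((1 : Fin 2), (1 : Fin 2)) then
    (1 / Real.sqrt 2 : ℝ) * Complex.exp (Complex.I * (Real.pi / 4 : ℝ))
  else 0

/-- The state (1/√2)(|00⟩ + i|11⟩). -/
def iBell : Fin 2 × Fin 2 → ℂ := fun p =>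
  if p = ((0 : Fin 2), (0 : Fin 2)) then (1 / Real.sqrt 2 : ℝ)
  else if p = ((1 : Fin 2), (1 : Fin 2)) then Complex.I * (1 / Real.sqrt 2 : ℝ)
  else 0

theorem local_T_gate_erases_magic :
    (Tgate ⊗ₖ (1 : Matrix (Fin 2) (Fin 2) ℂ)).mulVec lmState = iBell ∧
      M2two (dm iBell) = 0 := by
  constructor
  · funext p
    have key : Complex.exp (Complex.I * (Real.pi / 4 : ℝ)) *
        Complex.exp (Complex.I * (Real.pi / 4 : ℝ)) = Complex.I := by
      rw [← Complex.exp_add]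
      have : Complex.I * (Real.pi / 4 : ℝ) + Complex.I * (Real.pi / 4 : ℝ) =
          (Real.pi / 2 : ℝ) * Complex.I := by push_cast; ring
      rw [this, Complex.exp_mul_I, ← Complex.ofReal_cos, ← Complex.ofReal_sin,
        Real.cos_pi_div_two, Real.sin_pi_div_two]
      simp
    obtain ⟨i, j⟩ := p
    fin_cases i <;> fin_cases j <;>
      simp [Matrix.mulVec, dotProduct, Fintype.sum_prod_type, Fin.sum_univ_two,
        Tgate, lmState, iBell, Matrix.one_apply] <;>
      (push_cast at key; linear_combination ((Real.sqrt 2 : ℂ))⁻¹ * key)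
  · have hsum : ∑ a : Fin 4 × Fin 4, ‖(pauli2 a * dm iBell).trace‖ ^ 4 = 4 := by
      have h2 : (Real.sqrt 2 : ℝ) ^ 2 = 2 := Real.sq_sqrt (by norm_num)
      simp only [pauli2, pauli, dm, iBell, Matrix.trace, Matrix.diag, Matrix.mul_apply,
        Matrix.vecMulVec_apply, Fintype.sum_prod_type, Fin.sum_univ_two, Fin.sum_univ_four,
        Matrix.kroneckerMap_apply, Matrix.cons_val', Matrix.cons_val_zero, Matrix.cons_val_one,
        Matrix.head_cons, Matrix.head_fin_const, Matrix.empty_val', Matrix.cons_val_fin_one,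
        Matrix.one_apply, Pi.star_apply, RCLike.star_def, Matrix.cons_val]
      norm_num [Complex.ext_iff, map_div₀, Complex.norm_def, Complex.normSq, Complex.conj_I]
      have h3 : Real.sqrt 2 / 2 * (Real.sqrt 2 / 2) = 1/2 := by nlinarith [h2]
      rw [h3]; norm_num
    rw [M2two, hsum]
    norm_num
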